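/- Let q be a prime power with q ≡ 1 (mod 4), let C be the set of nonzero squares in GF(q) and A_2 = αC its nontrivial coset (α a primitive element). Then {C, αC} is a (q, 2, (q-1)/2, (q-1)/4)-SEDF in the additive group of GF(q). -/

import Mathlib

open Finset

/-- The multiset of external differences `{x - y : x ∈ A, y ∈ B}`. -/
def extDiffs {G : Type*} [AddCommGroup G] [DecidableEq G] (A B : Finset G) : Multiset G :=
  (A ×ˢ B).val.map (fun p => p.1 - p.2)

/-- An `(n, m, k, λ)`-strong external difference family in `G` (with `n = |G|`):
`m ≥ 2` disjoint `k`-subsets such that for each `i` the multiset of external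
differences from `A i` equals `λ` copies of `G \ {0}`. -/
def IsSEDF {G : Type*} [AddCommGroup G] [Fintype G] [DecidableEq G]
    (m k l : ℕ) (A : Fin m → Finset G) : Prop :=
  2 ≤ m ∧ (∀ i, (A i).card = k) ∧
  (∀ i j, i ≠ j → Disjoint (A i) (A j)) ∧
  ∀ i, (∑ j ∈ Finset.univ.erase i, extDiffs (A i) (A j))
      = l • (Finset.univ.erase (0 : G)).val

/-- count of pairs with difference d -/
def cnt {F : Type*} [AddCommGroup F] [DecidableEq F] (A B : Finset F) (d : F) : ℕ :=
  ((A ×ˢ B).filter fun p => p.1 - p.2 = d).card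

lemma cnt_smul {F : Type*} [Field F] [DecidableEq F] (A B : Finset F) {u : F} (hu : u ≠ 0)
    (d : F) : cnt (A.image (u * ·)) (B.image (u * ·)) (u * d) = cnt A B d := by
  unfold cnt
  symm
  apply Finset.card_nbij' (fun p => (u * p.1, u * p.2)) (fun p => (u⁻¹ * p.1, u⁻¹ * p.2))
  · intro p (hp : p ∈ ((A ×ˢ B).filter fun p => p.1 - p.2 = d))
    show _ ∈ ((A.image (u * ·) ×ˢ B.image (u * ·)).filter fun p => p.1 - p.2 = u * d)
    simp only [mem_filter, mem_product, mem_image] at hp ⊢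
    obtain ⟨⟨h1, h2⟩, h3⟩ := hp
    exact ⟨⟨⟨p.1, h1, rfl⟩, ⟨p.2, h2, rfl⟩⟩, by rw [← mul_sub, h3]⟩
  · intro p (hp : p ∈ ((A.image (u * ·) ×ˢ B.image (u * ·)).filter fun p => p.1 - p.2 = u * d))
    show _ ∈ ((A ×ˢ B).filter fun p => p.1 - p.2 = d)
    simp only [mem_filter, mem_product, mem_image] at hp ⊢
    obtain ⟨⟨⟨a, ha, ha'⟩, ⟨b, hb, hb'⟩⟩, h3⟩ := hp
    refine ⟨⟨?_, ?_⟩, ?_⟩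
    · rwa [← ha', inv_mul_cancel_left₀ hu]
    · rwa [← hb', inv_mul_cancel_left₀ hu]
    · rw [← mul_sub, h3, inv_mul_cancel_left₀ hu]
  · intro p _; simp [inv_mul_cancel_left₀ hu]
  · intro p _; simp [mul_inv_cancel_left₀ hu]

lemma cnt_neg {F : Type*} [Field F] [DecidableEq F] (A B : Finset F) (d : F) :
    cnt (B.image (fun x => -x)) (A.image (fun x => -x)) d = cnt A B d := by
  unfold cnt
  symm
  apply Finset.card_nbij' (fun p => (-p.2, -p.1)) (fun p => (-p.2, -p.1))
  · intro p (hp : p ∈ ((A ×ˢ B).filter fun p => p.1 - p.2 = d))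
    show _ ∈ ((B.image (fun x => -x) ×ˢ A.image (fun x => -x)).filter fun p => p.1 - p.2 = d)
    simp only [mem_filter, mem_product, mem_image] at hp ⊢
    obtain ⟨⟨h1, h2⟩, h3⟩ := hp
    exact ⟨⟨⟨p.2, h2, rfl⟩, ⟨p.1, h1, rfl⟩⟩, by rw [← h3]; ring⟩
  · intro p (hp : p ∈ ((B.image (fun x => -x) ×ˢ A.image (fun x => -x)).filter fun p => p.1 - p.2 = d))
    show _ ∈ ((A ×ˢ B).filter fun p => p.1 - p.2 = d)
    simp only [mem_filter, mem_product, mem_image] at hp ⊢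
    obtain ⟨⟨⟨a, ha, ha'⟩, ⟨b, hb, hb'⟩⟩, h3⟩ := hp
    refine ⟨⟨?_, ?_⟩, ?_⟩
    · rw [← hb']; simpa using hb
    · rw [← ha']; simpa using ha
    · rw [← h3]; ring
  · intro p _; simp
  · intro p _; simp

theorem stmt14 {F : Type*} [Field F] [Fintype F] [DecidableEq F]
    (hq : Fintype.card F % 4 = 1) (α : F)
    (hα : ∀ x : F, x ≠ 0 → ∃ j : ℕ, α ^ j = x) :
    IsSEDF 2 ((Fintype.card F - 1) / 2) ((Fintype.card F - 1) / 4)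
      ![Finset.univ.filter (fun x : F => x ≠ 0 ∧ ∃ y, y * y = x),
        (Finset.univ.filter (fun x : F => x ≠ 0 ∧ ∃ y, y * y = x)).image (fun x => α * x)] := by
  classical
  set q := Fintype.card F with hqdef
  set A1 : Finset F := Finset.univ.filter (fun x : F => x ≠ 0 ∧ ∃ y, y * y = x) with hA1def
  set A2 : Finset F := A1.image (fun x => α * x) with hA2def
  have hcard2 : 2 ≤ q := Fintype.one_lt_card
  have hq5 : 5 ≤ q := by omega
  -- membership in A1
  have memA1 : ∀ x : F, x ∈ A1 ↔ x ≠ 0 ∧ ∃ y, y * y = x := by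
    intro x; simp [hA1def]
  -- α ≠ 0
  have hα0 : α ≠ 0 := by
    intro h0
    have hsub : (Finset.univ : Finset F) ⊆ {0, 1} := by
      intro x _
      by_cases hx : x = 0
      · simp [hx]
      · obtain ⟨j, hj⟩ := hα x hx
        rcases Nat.eq_zero_or_pos j with hj0 | hjp
        · subst hj0; simp at hj; simp [← hj]
        · rw [h0, zero_pow (by omega)] at hj; simp [← hj]
    have := Finset.card_le_card hsub
    have h01 : ({0, 1} : Finset F).card ≤ 2 := Finset.card_insert_le _ _ |>.trans (by simp)
    rw [Finset.card_univ] at this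
    omega
  -- ringChar ≠ 2
  have hchar : ringChar F ≠ 2 := by
    intro h2
    have := FiniteField.even_card_of_char_two (F := F) h2
    omega
  -- α is not a square
  have hαns : ¬ ∃ t : F, t * t = α := by
    rintro ⟨t, ht⟩
    obtain ⟨a, ha⟩ := FiniteField.exists_nonsquare (F := F) hchar
    have ha0 : a ≠ 0 := by rintro rfl; exact ha ⟨0, by simp⟩
    obtain ⟨j, hj⟩ := hα a ha0
    exact ha ⟨t ^ j, by rw [← hj, ← ht]; rw [← mul_pow]⟩
  -- -1 is a square
  have hneg1 : ∃ t : F, t * t = (-1 : F) := by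
    have : IsSquare (-1 : F) := (FiniteField.isSquare_neg_one_iff).mpr (by omega)
    obtain ⟨r, hr⟩ := this
    exact ⟨r, hr.symm⟩
  -- membership in A2: nonzero nonsquares
  have memA2 : ∀ x : F, x ∈ A2 ↔ x ≠ 0 ∧ ¬ ∃ y, y * y = x := by
    intro x
    constructor
    · intro hx
      rw [hA2def, Finset.mem_image] at hx
      obtain ⟨c, hc, hcx⟩ := hx
      rw [memA1] at hc
      obtain ⟨hc0, t, ht⟩ := hc
      have ht0 : t ≠ 0 := by rintro rfl; simp at ht; exact hc0 ht.symm
      constructor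
      · rw [← hcx]; exact mul_ne_zero hα0 hc0
      · rintro ⟨y, hy⟩
        apply hαns
        refine ⟨y * t⁻¹, ?_⟩
        have hyc : y * y = α * (t * t) := by rw [ht, hy]; exact hcx.symm
        calc (y * t⁻¹) * (y * t⁻¹) = (y * y) * (t⁻¹ * t⁻¹) := by ring
          _ = α * (t * t) * (t⁻¹ * t⁻¹) := by rw [hyc]
          _ = α := by field_simp
    · rintro ⟨hx0, hxs⟩
      obtain ⟨j, hj⟩ := hα x hx0
      have hodd : j % 2 = 1 := by
        rcases Nat.even_or_odd j with he | ho
        · exfalso; obtain ⟨k, hk⟩ := he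
          exact hxs ⟨α ^ k, by rw [← hj, hk, ← pow_add]⟩
        · exact Nat.odd_iff.mp ho
      obtain ⟨k, hk⟩ : ∃ k, j = 2 * k + 1 := ⟨j / 2, by omega⟩
      rw [hA2def, Finset.mem_image]
      refine ⟨α ^ k * α ^ k, ?_, ?_⟩
      · rw [memA1]
        exact ⟨mul_ne_zero (pow_ne_zero _ hα0) (pow_ne_zero _ hα0), ⟨α ^ k, rfl⟩⟩
      · rw [← hj, hk]; ring
  -- disjointness
  have hdisj : Disjoint A1 A2 := by
    rw [Finset.disjoint_left]
    intro x h1 h2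
    rw [memA1] at h1; rw [memA2] at h2
    exact h2.2 h1.2
  -- partition of nonzero elements
  have hpart : A1 ∪ A2 = Finset.univ.erase (0 : F) := by
    ext x
    rw [Finset.mem_union, memA1, memA2, Finset.mem_erase]
    constructor
    · rintro (⟨h, _⟩ | ⟨h, _⟩) <;> exact ⟨h, Finset.mem_univ x⟩
    · rintro ⟨h, _⟩
      by_cases hs : ∃ y : F, y * y = x
      · exact Or.inl ⟨h, hs⟩
      · exact Or.inr ⟨h, hs⟩
  -- cardinalities
  have hcardeq : A2.card = A1.card := by
    rw [hA2def]
    exact Finset.card_image_of_injective _ (mul_right_injective₀ hα0)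
  have hcarderase : (Finset.univ.erase (0 : F)).card = q - 1 := by
    rw [Finset.card_erase_of_mem (Finset.mem_univ _), Finset.card_univ]
  have hcardA1 : A1.card = (q - 1) / 2 := by
    have := Finset.card_union_of_disjoint hdisj
    rw [hpart, hcarderase] at this
    omega
  -- image lemmas
  have imgA1 : ∀ s : F, s ≠ 0 → (∃ t : F, t * t = s) → A1.image (fun x => s * x) = A1 := by
    rintro s hs0 ⟨t, ht⟩
    have ht0 : t ≠ 0 := by rintro rfl; simp at ht; exact hs0 ht.symm
    ext x
    rw [Finset.mem_image]
    constructor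
    · rintro ⟨c, hc, rfl⟩
      rw [memA1] at hc ⊢
      obtain ⟨hc0, u, hu⟩ := hc
      exact ⟨mul_ne_zero hs0 hc0, ⟨t * u, by rw [← ht, ← hu]; ring⟩⟩
    · intro hx
      rw [memA1] at hx
      obtain ⟨hx0, u, hu⟩ := hx
      refine ⟨s⁻¹ * x, ?_, by field_simp⟩
      rw [memA1]
      refine ⟨mul_ne_zero (inv_ne_zero hs0) hx0, ⟨t⁻¹ * u, ?_⟩⟩
      have h2 : (t⁻¹ * u) * (t⁻¹ * u) = (u * u) * (t * t)⁻¹ := by rw [mul_inv]; ring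
      rw [h2, hu, ht]; exact mul_comm _ _
  have imgA2 : ∀ s : F, s ≠ 0 → (∃ t : F, t * t = s) → A2.image (fun x => s * x) = A2 := by
    intro s hs0 hst
    conv_lhs => rw [hA2def]
    rw [Finset.image_image]
    have : ((fun x => s * x) ∘ (fun x => α * x)) = ((fun x => α * x) ∘ (fun x => s * x)) := by
      funext x; simp only [Function.comp_apply]; ring
    rw [this, ← Finset.image_image, imgA1 s hs0 hst, ← hA2def]
  have imgA2α : A2.image (fun x => α * x) = A1 := by
    conv_lhs => rw [hA2def]
    rw [Finset.image_image]
    have : ((fun x => α * x) ∘ (fun x => α * x)) = (fun x => (α * α) * x) := by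
      funext x; simp only [Function.comp_apply]; ring
    rw [this]
    exact imgA1 (α * α) (mul_ne_zero hα0 hα0) ⟨α, rfl⟩
  have imgA1neg : A1.image (fun x => -x) = A1 := by
    have : (fun x : F => -x) = (fun x => (-1 : F) * x) := by funext x; ring
    rw [this]
    exact imgA1 (-1) (by norm_num) hneg1
  have imgA2neg : A2.image (fun x => -x) = A2 := by
    have : (fun x : F => -x) = (fun x => (-1 : F) * x) := by funext x; ring
    rw [this]
    exact imgA2 (-1) (by norm_num) hneg1
  -- count lemmas
  have negr : ∀ d : F, cnt A2 A1 d = cnt A1 A2 d := by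
    intro d
    have := cnt_neg A1 A2 d
    rwa [imgA1neg, imgA2neg] at this
  have smulr : ∀ s d : F, s ≠ 0 → (∃ t : F, t * t = s) → cnt A1 A2 (s * d) = cnt A1 A2 d := by
    intro s d hs0 hst
    have := cnt_smul A1 A2 hs0 d
    rwa [show ((s * ·) : F → F) = (fun x => s * x) from rfl, imgA1 s hs0 hst, imgA2 s hs0 hst]
      at this
  have alphr : ∀ d : F, cnt A2 A1 (α * d) = cnt A1 A2 d := by
    intro d
    have := cnt_smul A1 A2 hα0 d
    rwa [show ((α * ·) : F → F) = (fun x => α * x) from rfl, ← hA2def, imgA2α] at this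
  -- all nonzero counts equal cnt A1 A2 1
  set t := cnt A1 A2 1 with htdef
  have keycnt : ∀ d : F, d ≠ 0 → cnt A1 A2 d = t := by
    intro d hd0
    by_cases hds : ∃ y : F, y * y = d
    · have := smulr d 1 hd0 hds
      rwa [mul_one] at this
    · -- d nonsquare: d = α * s with s nonzero square
      have hs : ∃ s : F, (s ≠ 0 ∧ ∃ y : F, y * y = s) ∧ d = α * s := by
        obtain ⟨j, hj⟩ := hα d hd0
        have hodd : j % 2 = 1 := by
          rcases Nat.even_or_odd j with he | ho
          · exfalso; obtain ⟨k, hk⟩ := he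
            exact hds ⟨α ^ k, by rw [← hj, hk, ← pow_add]⟩
          · exact Nat.odd_iff.mp ho
        obtain ⟨k, hk⟩ : ∃ k, j = 2 * k + 1 := ⟨j / 2, by omega⟩
        refine ⟨α ^ k * α ^ k,
          ⟨mul_ne_zero (pow_ne_zero _ hα0) (pow_ne_zero _ hα0), ⟨α ^ k, rfl⟩⟩, ?_⟩
        rw [← hj, hk]; ring
      obtain ⟨s, ⟨hs0, hssq⟩, rfl⟩ := hs
      have h1 : cnt A1 A2 (α * s) = cnt A1 A2 α := by
        rw [mul_comm]; exact smulr s α hs0 hssq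
      have h2 := alphr 1
      rw [mul_one] at h2
      rw [h1, ← negr, h2]
  have keycnt2 : ∀ d : F, d ≠ 0 → cnt A2 A1 d = t := fun d hd => by
    rw [negr]; exact keycnt d hd
  -- count at zero
  have cnt0 : ∀ (A B : Finset F), Disjoint A B → cnt A B 0 = 0 := by
    intro A B hd
    unfold cnt
    rw [Finset.card_eq_zero, Finset.filter_eq_empty_iff]
    rintro ⟨a, b⟩ hab h
    rw [Finset.mem_product] at hab
    have hab2 : a = b := sub_eq_zero.mp h
    exact (Finset.disjoint_left.mp hd hab.1) (hab2 ▸ hab.2)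
  -- count in extDiffs
  have countED : ∀ (A B : Finset F) (d : F), Multiset.count d (extDiffs A B) = cnt A B d := by
    intro A B d
    unfold extDiffs cnt
    rw [Multiset.count_map]
    rw [Multiset.filter_congr (fun (x : F × F) _ => (eq_comm : (d = x.1 - x.2) ↔ _))]
    rfl
  -- count in the RHS multiset
  have countRHS : ∀ (d : F) (l : ℕ),
      Multiset.count d (l • (Finset.univ.erase (0 : F)).val) = if d = 0 then 0 else l := by
    intro d l
    rw [Multiset.count_nsmul]
    by_cases hd : d = 0
    · rw [if_pos hd, Multiset.count_eq_zero.mpr, mul_zero]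
      rw [hd]
      intro hmem
      exact absurd (Finset.mem_erase.mp hmem).1 (by simp)
    · rw [if_neg hd, Multiset.count_eq_one_of_mem (Finset.univ.erase (0 : F)).nodup
        (by rw [Finset.mem_val]; exact Finset.mem_erase.mpr ⟨hd, Finset.mem_univ d⟩), mul_one]
  -- the two multiset equalities
  have hED12 : extDiffs A1 A2 = t • (Finset.univ.erase (0 : F)).val := by
    refine Multiset.ext.mpr fun d => ?_
    rw [countED, countRHS]
    by_cases hd : d = 0
    · rw [if_pos hd, hd]; exact cnt0 A1 A2 hdisj
    · rw [if_neg hd]; exact keycnt d hd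
  have hED21 : extDiffs A2 A1 = t • (Finset.univ.erase (0 : F)).val := by
    refine Multiset.ext.mpr fun d => ?_
    rw [countED, countRHS]
    by_cases hd : d = 0
    · rw [if_pos hd, hd]; exact cnt0 A2 A1 hdisj.symm
    · rw [if_neg hd]; exact keycnt2 d hd
  -- cardinality computation gives t = (q-1)/4
  have hcardsum : (q - 1) / 2 * ((q - 1) / 2) = t * (q - 1) := by
    have h1 := congrArg Multiset.card hED12
    rw [Multiset.card_nsmul] at h1
    unfold extDiffs at h1
    rw [Multiset.card_map] at h1
    have h2 : Multiset.card (A1 ×ˢ A2).val = A1.card * A2.card := by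
      rw [← Finset.card_product]; rfl
    rw [h2, hcardeq, hcardA1] at h1
    have h3 : Multiset.card (Finset.univ.erase (0 : F)).val = q - 1 := hcarderase
    rw [h3] at h1
    exact h1
  have ht4 : t = (q - 1) / 4 := by
    obtain ⟨m, hm, hm2, hm1⟩ : ∃ m, q - 1 = 4 * m ∧ (q - 1) / 2 = 2 * m ∧ 1 ≤ m := by
      refine ⟨(q - 1) / 4, by omega, by omega, by omega⟩
    rw [hm2, hm] at hcardsum
    have e1 : 4 * (m * m) = 2 * m * (2 * m) := by ring
    have e2 : t * (4 * m) = 4 * (m * t) := by ring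
    have h4 : 4 * (m * m) = 4 * (m * t) := e1.trans (hcardsum.trans e2)
    have h5 : m * m = m * t := Nat.eq_of_mul_eq_mul_left (by norm_num) h4
    have h6 : m = t := Nat.eq_of_mul_eq_mul_left (by omega) h5
    omega
  rw [ht4] at hED12 hED21
  -- assembly
  refine ⟨le_refl 2, ?_, ?_, ?_⟩
  · intro i
    fin_cases i
    · exact hcardA1
    · exact hcardeq.trans hcardA1
  · intro i j hij
    fin_cases i <;> fin_cases j
    · exact absurd rfl hij
    · simpa using hdisj
    · simpa using hdisj.symm
    · exact absurd rfl hij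
  · intro i
    fin_cases i
    · have he : (Finset.univ.erase (0 : Fin 2)) = {1} := by decide
      show (∑ j ∈ Finset.univ.erase (0 : Fin 2), extDiffs A1 (![A1, A2] j)) = _
      rw [he, Finset.sum_singleton]
      exact hED12
    · have he : (Finset.univ.erase (1 : Fin 2)) = {0} := by decide
      show (∑ j ∈ Finset.univ.erase (1 : Fin 2), extDiffs A2 (![A1, A2] j)) = _
      rw [he, Finset.sum_singleton]
      exact hED21
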